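/- Let P be a hereditary graph class that is closed under adding universal vertices, i.e., for every graph H in P, the graph obtained from H by adding a new vertex adjacent to all vertices of H is also in P. Let G be a finite graph and let G' be obtained from G by adding a new vertex u adjacent to all vertices of G. Then every maximal P set of G' contains u, and a set S ⊆ V(G) is a maximal P set of G if and only if S ∪ {u} is a maximal connected P set of G'. -/
import Mathlib


attribute [local instance] Classical.propDecidable

/-- A *graph class*: a collection of finite simple graphs, given as a property of
simple graphs over every finite vertex type. -/
abbrev GraphClass : Type 1 :=
  ∀ (V : Type) [Fintype V], SimpleGraph V → Prop

/-- The graph class is a nonempty collection of graphs. -/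
def GraphClass.NonemptyClass (P : GraphClass) : Prop :=
  ∃ (V : Type) (_ : Fintype V) (G : SimpleGraph V), P V G

/-- The graph class is closed under isomorphism. -/
def GraphClass.IsoClosed (P : GraphClass) : Prop :=
  ∀ (V W : Type) (_ : Fintype V) (_ : Fintype W) (G : SimpleGraph V) (H : SimpleGraph W),
    _root_.Nonempty (G ≃g H) → (P V G ↔ P W H)

/-- The graph class is hereditary: it is closed under taking induced subgraphs. -/
def GraphClass.Hereditary (P : GraphClass) : Prop :=
  ∀ (V : Type) (_ : Fintype V) (G : SimpleGraph V) (S : Set V),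
    P V G → P (↥S) (G.induce S)

variable {V : Type} [Fintype V]

/-- `S ⊆ V(G)` is a `P` set of `G` if the induced subgraph `G[S]` belongs to `P`. -/
def IsPSet (P : GraphClass) (G : SimpleGraph V) (S : Set V) : Prop :=
  P (↥S) (G.induce S)

/-- `S` is a maximal `P` set of `G`: a `P` set with no proper superset that is a `P` set. -/
def IsMaxPSet (P : GraphClass) (G : SimpleGraph V) (S : Set V) : Prop :=
  IsPSet P G S ∧ ∀ T : Set V, S ⊂ T → ¬ IsPSet P G T

/-- `S` is a connected `P` set of `G`: a `P` set inducing a connected subgraph. -/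
def IsConnPSet (P : GraphClass) (G : SimpleGraph V) (S : Set V) : Prop :=
  IsPSet P G S ∧ (G.induce S).Connected

/-- `S` is a maximal connected `P` set of `G`: a connected `P` set contained in no
strictly larger connected `P` set. -/
def IsMaxConnPSet (P : GraphClass) (G : SimpleGraph V) (S : Set V) : Prop :=
  IsConnPSet P G S ∧ ∀ T : Set V, S ⊂ T → ¬ IsConnPSet P G T

/-- A forbidden set of `G` (with respect to the class `P`): an inclusion-minimal vertex
set inducing a subgraph that is not in `P`. -/
def IsForbiddenSet (P : GraphClass) (G : SimpleGraph V) (X : Set V) : Prop :=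
  ¬ IsPSet P G X ∧ ∀ Y : Set V, Y ⊂ X → IsPSet P G Y

/-- The graph obtained from `G` by adding a new universal vertex (the vertex `none`),
adjacent to all vertices of `G`. -/
def addUniversal {V : Type} (G : SimpleGraph V) : SimpleGraph (Option V) :=
  SimpleGraph.fromRel (fun a b =>
    (∃ x y, a = some x ∧ b = some y ∧ G.Adj x y) ∨ (a = none ∧ ∃ y, b = some y))

/-- A graph class is closed under adding universal vertices if for every graph `H` in the
class, the graph obtained from `H` by adding a new vertex adjacent to all vertices of `H`
is also in the class. -/
def GraphClass.ClosedUnderUniversal (P : GraphClass) : Prop :=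
  ∀ (V : Type) (_ : Fintype V) (G : SimpleGraph V), P V G → P (Option V) (addUniversal G)


section Helpers
open SimpleGraph

variable {W : Type} {G : SimpleGraph W}

lemma addU_adj_some_some {x y : W} :
    (addUniversal G).Adj (some x) (some y) ↔ G.Adj x y := by
  simp only [addUniversal, SimpleGraph.fromRel_adj, ne_eq, Option.some.injEq]
  constructor
  · rintro ⟨hne, h⟩
    rcases h with (⟨a,b,ha,hb,hab⟩|⟨h,-⟩) | (⟨a,b,ha,hb,hab⟩|⟨h,-⟩) <;> simp_all
    · exact hab.symm
  · intro h
    exact ⟨fun e => G.ne_of_adj h (by exact_mod_cast e), Or.inl (Or.inl ⟨x, y, rfl, rfl, h⟩)⟩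

lemma addU_adj_none_some (y : W) : (addUniversal G).Adj none (some y) := by
  refine ⟨by simp, Or.inl (Or.inr ⟨rfl, y, rfl⟩)⟩

lemma addU_adj_some_none (x : W) : (addUniversal G).Adj (some x) none :=
  (addU_adj_none_some x).symm

def eA (S : Set W) : Option ↥S ≃ ↥(insert none (some '' S) : Set (Option W)) where
  toFun := fun o => match o with
    | none => ⟨none, Set.mem_insert _ _⟩
    | some ⟨x, hx⟩ => ⟨some x, Set.mem_insert_of_mem _ ⟨x, hx, rfl⟩⟩
  invFun := fun a => match a with
    | ⟨none, _⟩ => none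
    | ⟨some x, ha⟩ => some ⟨x, by simpa using ha⟩
  left_inv := by rintro (_|⟨x,hx⟩) <;> rfl
  right_inv := by rintro ⟨(_|x), ha⟩ <;> rfl

def isoA (G : SimpleGraph W) (S : Set W) :
    addUniversal (G.induce S) ≃g (addUniversal G).induce (insert none (some '' S)) where
  toEquiv := eA S
  map_rel_iff' := by
    rintro (_|⟨x,hx⟩) (_|⟨y,hy⟩)
    · constructor <;> (intro h; exact absurd rfl h.ne)
    · show (addUniversal G).Adj none (some y) ↔ _
      simp [addU_adj_none_some, addU_adj_none_some (⟨y,hy⟩ : ↥S)]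
    · show (addUniversal G).Adj (some x) none ↔ _
      simp [addU_adj_some_none, addU_adj_some_none (⟨x,hx⟩ : ↥S)]
    · show (addUniversal G).Adj (some x) (some y) ↔ _
      rw [addU_adj_some_some, addU_adj_some_some]
      simp [SimpleGraph.comap_adj]

noncomputable def isoB (G : SimpleGraph W) (S : Set W) :
    G.induce S ≃g (addUniversal G).induce (some '' S) where
  toEquiv := Equiv.Set.image some S (Option.some_injective W)
  map_rel_iff' := by
    rintro ⟨x,hx⟩ ⟨y,hy⟩
    show (addUniversal G).Adj (some x) (some y) ↔ _
    rw [addU_adj_some_some]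
    simp [SimpleGraph.comap_adj]

def induceInduceIso (G : SimpleGraph W) {U T : Set W} (h : U ⊆ T) :
    (G.induce T).induce {x : ↥T | ↑x ∈ U} ≃g G.induce U where
  toFun := fun x => ⟨x.1.1, x.2⟩
  invFun := fun a => ⟨⟨a.1, h a.2⟩, a.2⟩
  left_inv := fun _ => rfl
  right_inv := fun _ => rfl
  map_rel_iff' := Iff.rfl

lemma connected_induce_of_none_mem {T : Set (Option W)} (hT : none ∈ T) :
    ((addUniversal G).induce T).Connected := by
  rw [SimpleGraph.connected_iff]
  have key : ∀ v : ↥T, ((addUniversal G).induce T).Reachable ⟨none, hT⟩ v := by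
    rintro ⟨(_|x), hv⟩
    · exact SimpleGraph.Reachable.refl _
    · exact SimpleGraph.Adj.reachable (addU_adj_none_some x)
  exact ⟨fun u v => (key u).symm.trans (key v), ⟨⟨none, hT⟩⟩⟩

lemma preimage_insert_image (S : Set W) :
    some ⁻¹' (insert none (some '' S) : Set (Option W)) = S := by
  ext x; simp

lemma eq_insert_image_preimage {T : Set (Option W)} (hT : none ∈ T) :
    T = insert none (some '' (some ⁻¹' T)) := by
  ext a; cases a <;> simp [hT]

lemma eq_image_preimage {T : Set (Option W)} (hT : none ∉ T) :
    T = some '' (some ⁻¹' T) := by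
  ext a; cases a <;> simp [hT]

end Helpers

/-- Let `P` be a hereditary graph class closed under adding universal
vertices, `G` a finite graph and `G'` the graph obtained from `G` by adding a new
universal vertex `u` (here `u = none`).  Then every maximal `P` set of `G'` contains
`u`, and `S ⊆ V(G)` is a maximal `P` set of `G` if and only if `S ∪ {u}` is a maximal
connected `P` set of `G'`. -/
theorem maxPSet_iff_maxConnPSet_addUniversal
    (P : GraphClass) (hne : P.NonemptyClass) (hiso : P.IsoClosed) (hher : P.Hereditary)
    (huniv : P.ClosedUnderUniversal)
    {V : Type} [Fintype V] (G : SimpleGraph V) :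
    (∀ S : Set (Option V), IsMaxPSet P (addUniversal G) S → none ∈ S) ∧
    (∀ S : Set V,
      IsMaxPSet P G S ↔
        IsMaxConnPSet P (addUniversal G) (insert none (some '' S))) := by
  classical
  -- L1: a P set of G yields a P set `insert none (some '' S)` of addUniversal G
  have L1 : ∀ S : Set V, IsPSet P G S →
      IsPSet P (addUniversal G) (insert none (some '' S)) := by
    intro S hS
    have h1 : P (Option ↥S) (addUniversal (G.induce S)) := huniv _ inferInstance _ hS
    exact (hiso _ _ inferInstance _ _ _ ⟨isoA G S⟩).mp h1
  -- L2: P sets are closed under subsets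
  have L2 : ∀ (W : Type) (_ : Fintype W) (H : SimpleGraph W) (U T : Set W),
      U ⊆ T → IsPSet P H T → IsPSet P H U := by
    intro W _ H U T hUT hT
    have h1 : P _ ((H.induce T).induce {x : ↥T | ↑x ∈ U}) :=
      hher _ inferInstance _ _ hT
    exact (hiso _ _ inferInstance inferInstance _ _ ⟨induceInduceIso H hUT⟩).mp h1
  -- L3: from a P set of addUniversal G to a P set of G
  have L3 : ∀ T : Set (Option V), IsPSet P (addUniversal G) T →
      IsPSet P G (some ⁻¹' T) := by
    intro T hT
    have hsub : some '' (some ⁻¹' T) ⊆ T := Set.image_preimage_subset _ _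
    have h1 : IsPSet P (addUniversal G) (some '' (some ⁻¹' T)) :=
      L2 _ inferInstance _ _ _ hsub hT
    exact (hiso _ _ _ _ _ _ ⟨isoB G (some ⁻¹' T)⟩).mpr h1
  constructor
  · -- every maximal P set of addUniversal G contains none
    intro S hS
    by_contra hnone
    have hSeq : S = some '' (some ⁻¹' S) := eq_image_preimage hnone
    have h0 : IsPSet P G (some ⁻¹' S) := L3 S hS.1
    have h1 : IsPSet P (addUniversal G) (insert none (some '' (some ⁻¹' S))) :=
      L1 _ h0
    rw [← hSeq] at h1
    exact hS.2 (insert none S) (Set.ssubset_insert hnone) h1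
  · intro S
    constructor
    · rintro ⟨hS1, hS2⟩
      refine ⟨⟨L1 S hS1, connected_induce_of_none_mem (Set.mem_insert _ _)⟩, ?_⟩
      rintro T hsub ⟨hTP, -⟩
      have hnT : none ∈ T := hsub.1 (Set.mem_insert _ _)
      have hT0 : IsPSet P G (some ⁻¹' T) := L3 T hTP
      have hsub2 : S ⊆ some ⁻¹' T := by
        intro x hx
        exact hsub.1 (Set.mem_insert_of_mem _ ⟨x, hx, rfl⟩)
      have hne : S ≠ some ⁻¹' T := by
        intro hEq
        apply hsub.ne
        rw [eq_insert_image_preimage hnT, ← hEq]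
      exact hS2 _ (Set.ssubset_iff_subset_ne.mpr ⟨hsub2, hne⟩) hT0
    · rintro ⟨⟨hS1, -⟩, hS2⟩
      constructor
      · have := L3 _ hS1
        rwa [preimage_insert_image] at this
      · intro T hST hTP
        have hconn : IsConnPSet P (addUniversal G) (insert none (some '' T)) :=
          ⟨L1 T hTP, connected_induce_of_none_mem (Set.mem_insert _ _)⟩
        have hsub : insert none (some '' S) ⊆ insert none (some '' T) :=
          Set.insert_subset_insert (Set.image_mono hST.subset)
        have hne : insert none (some '' S) ≠ insert none (some '' T) := by
          intro hEq
          apply hST.ne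
          have := congrArg (fun X => some ⁻¹' X) hEq
          simpa [preimage_insert_image] using this
        exact hS2 _ (Set.ssubset_iff_subset_ne.mpr ⟨hsub, hne⟩) hconn
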